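/- Let (Q_β(t), P_β(t)) be a C¹ solution of the semi-discrete equations Q̇_β = Σ_k u_k ψ_k(Q_β), Ṗ_β = −Σ_k (P_β · u_k) ∇ψ_k(Q_β), where at each time the mesh vectors are determined by the momentum-map relation u(t) = A⁻¹ m(Q(t),P(t)) with m_k = Σ_β P_β ψ_k(Q_β) and A a symmetric, positive-definite, invertible operator on (ℝ²)^{n_g}. Then the discrete energy, half the squared discrete norm of the velocity, ½⟨u(t), A u(t)⟩, is constant in time. -/

import Mathlib

open scoped RealInnerProductSpace BigOperators

/-- Along any `C¹` solution of the semi-discrete equations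
`Q̇_β = Σ_k u_k ψ_k(Q_β)`, `Ṗ_β = −Σ_k (P_β · u_k) ∇ψ_k(Q_β)`, with the mesh vectors
determined by the momentum-map relation `A u = m(Q,P)`, `m_k = Σ_β P_β ψ_k(Q_β)`,
`A` symmetric positive-definite and invertible, the discrete energy `½⟨u, A u⟩`
is constant in time. -/
theorem semidiscrete_energy_conservation
    {np ng : ℕ}
    (ψ : Fin ng → EuclideanSpace ℝ (Fin 2) → ℝ)
    (hψ : ∀ k, Differentiable ℝ (ψ k))
    (A : (Fin ng → EuclideanSpace ℝ (Fin 2)) →ₗ[ℝ] (Fin ng → EuclideanSpace ℝ (Fin 2)))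
    (hAsymm : ∀ x y, ∑ k, ⟪A x k, y k⟫ = ∑ k, ⟪x k, A y k⟫)
    (hApos : ∀ x, x ≠ 0 → 0 < ∑ k, ⟪A x k, x k⟫)
    (hAinv : Function.Bijective A)
    (Q P : Fin np → ℝ → EuclideanSpace ℝ (Fin 2))
    (u : ℝ → Fin ng → EuclideanSpace ℝ (Fin 2))
    (hu : ∀ t, A (u t) = fun k => ∑ β, ψ k (Q β t) • P β t)
    (hQ : ∀ β t, HasDerivAt (Q β) (∑ k, ψ k (Q β t) • u t k) t)
    (hP : ∀ β t,
      HasDerivAt (P β) (-∑ k, ⟪P β t, u t k⟫ • gradient (ψ k) (Q β t)) t) :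
    ∀ t₁ t₂ : ℝ,
      (1 / 2) * ∑ k, ⟪u t₁ k, A (u t₁) k⟫
        = (1 / 2) * ∑ k, ⟪u t₂ k, A (u t₂) k⟫ := by
  classical
  set Q' : Fin np → ℝ → EuclideanSpace ℝ (Fin 2) :=
    fun β t => ∑ k, ψ k (Q β t) • u t k with hQ'def
  set P' : Fin np → ℝ → EuclideanSpace ℝ (Fin 2) :=
    fun β t => -∑ k, ⟪P β t, u t k⟫ • gradient (ψ k) (Q β t) with hP'def
  set m : ℝ → (Fin ng → EuclideanSpace ℝ (Fin 2)) :=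
    fun t k => ∑ β, ψ k (Q β t) • P β t with hmdef
  set m' : ℝ → (Fin ng → EuclideanSpace ℝ (Fin 2)) := fun t k =>
    ∑ β, (ψ k (Q β t) • P' β t + ⟪gradient (ψ k) (Q β t), Q' β t⟫ • P β t) with hm'def
  -- derivative of ψ k (Q β t)
  have hψQ : ∀ k β t, HasDerivAt (fun s => ψ k (Q β s))
      ⟪gradient (ψ k) (Q β t), Q' β t⟫ t := by
    intro k β t
    have h1 := ((hψ k).differentiableAt.hasGradientAt.hasFDerivAt
      (x := Q β t)).comp_hasDerivAt t (hQ β t)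
    simpa only [Function.comp_def, InnerProductSpace.toDual_apply_apply] using h1
  have hm : ∀ t, HasDerivAt m (m' t) t := by
    intro t
    rw [hasDerivAt_pi]
    intro k
    refine HasDerivAt.fun_sum fun β _ => ?_
    exact (hψQ k β t).smul (hP β t)
  -- u as composition with inverse of A
  let L : (Fin ng → EuclideanSpace ℝ (Fin 2)) ≃ₗ[ℝ] (Fin ng → EuclideanSpace ℝ (Fin 2)) :=
    LinearEquiv.ofBijective A hAinv
  let Lc := L.toContinuousLinearEquiv
  have hLc : ∀ x, Lc x = A x := fun x => rfl
  have huL : ∀ t, u t = Lc.symm (m t) := by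
    intro t
    have h : Lc (u t) = m t := (hLc _).trans (hu t)
    rw [← h, ContinuousLinearEquiv.symm_apply_apply]
  have hud : ∀ t, HasDerivAt u (Lc.symm (m' t)) t := by
    intro t
    have h := (Lc.symm.toContinuousLinearMap.hasFDerivAt (x := m t)).comp_hasDerivAt t (hm t)
    have h2 : (fun s => Lc.symm (m s)) = u := by funext s; rw [huL s]
    simpa only [Function.comp_def, ContinuousLinearEquiv.coe_coe, h2] using h
  have hAu' : ∀ t, A (Lc.symm (m' t)) = m' t := by
    intro t
    rw [← hLc]
    exact Lc.apply_symm_apply (m' t)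
  -- energy function
  set g : ℝ → ℝ := fun t => ∑ k, ⟪u t k, m t k⟫ with hgdef
  have hgd : ∀ t, HasDerivAt g
      (∑ k, (⟪u t k, m' t k⟫ + ⟪Lc.symm (m' t) k, m t k⟫)) t := by
    intro t
    refine HasDerivAt.fun_sum fun k _ => ?_
    exact HasDerivAt.inner ℝ (hasDerivAt_pi.mp (hud t) k) (hasDerivAt_pi.mp (hm t) k)
  -- the derivative vanishes
  have hkey : ∀ t, (∑ k, (⟪u t k, m' t k⟫ + ⟪Lc.symm (m' t) k, m t k⟫)) = 0 := by
    intro t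
    have hsym : ∑ k, ⟪Lc.symm (m' t) k, m t k⟫ = ∑ k, ⟪u t k, m' t k⟫ := by
      calc ∑ k, ⟪Lc.symm (m' t) k, m t k⟫
          = ∑ k, ⟪Lc.symm (m' t) k, A (u t) k⟫ := by rw [hu t]
        _ = ∑ k, ⟪A (u t) k, Lc.symm (m' t) k⟫ :=
            Finset.sum_congr rfl fun k _ => real_inner_comm _ _
        _ = ∑ k, ⟪u t k, A (Lc.symm (m' t)) k⟫ := hAsymm _ _
        _ = ∑ k, ⟪u t k, m' t k⟫ := by rw [hAu' t]
    have hzero : ∑ k, ⟪u t k, m' t k⟫ = 0 := by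
      have expand : ∑ k, ⟪u t k, m' t k⟫ =
          (∑ β, ⟪Q' β t, P' β t⟫)
          + ∑ k, ∑ β, ⟪gradient (ψ k) (Q β t), Q' β t⟫ * ⟪u t k, P β t⟫ := by
        simp only [hm'def, inner_sum, inner_add_right, real_inner_smul_right,
          Finset.sum_add_distrib]
        congr 1
        rw [Finset.sum_comm]
        refine Finset.sum_congr rfl fun β _ => ?_
        rw [hQ'def]
        simp only [sum_inner, real_inner_smul_left]
      have hbeta : ∀ β, ⟪Q' β t, P' β t⟫ =
          -∑ k, ⟪gradient (ψ k) (Q β t), Q' β t⟫ * ⟪u t k, P β t⟫ := by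
        intro β
        rw [hP'def]
        simp only [inner_neg_right, inner_sum, real_inner_smul_right, neg_inj]
        refine Finset.sum_congr rfl fun k _ => ?_
        rw [real_inner_comm (Q' β t) (gradient (ψ k) (Q β t)),
          real_inner_comm (P β t) (u t k)]
        ring
      have last : ∑ β, ⟪Q' β t, P' β t⟫ =
          -∑ k, ∑ β, ⟪gradient (ψ k) (Q β t), Q' β t⟫ * ⟪u t k, P β t⟫ := by
        calc ∑ β, ⟪Q' β t, P' β t⟫
            = ∑ β, -∑ k, ⟪gradient (ψ k) (Q β t), Q' β t⟫ * ⟪u t k, P β t⟫ :=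
              Finset.sum_congr rfl fun β _ => hbeta β
          _ = -∑ β, ∑ k, ⟪gradient (ψ k) (Q β t), Q' β t⟫ * ⟪u t k, P β t⟫ := by
              rw [Finset.sum_neg_distrib]
          _ = -∑ k, ∑ β, ⟪gradient (ψ k) (Q β t), Q' β t⟫ * ⟪u t k, P β t⟫ := by
              rw [Finset.sum_comm]
      rw [expand, last]; ring
    rw [Finset.sum_add_distrib, hsym, hzero]; ring
  -- conclude constancy
  intro t₁ t₂
  have hconst : g t₁ = g t₂ := by
    have hdiff : Differentiable ℝ g := fun t => (hgd t).differentiableAt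
    have hderiv : ∀ t, deriv g t = 0 := fun t => by rw [(hgd t).deriv, hkey t]
    exact is_const_of_deriv_eq_zero hdiff hderiv t₁ t₂
  have h1 : ∀ t, (∑ k, ⟪u t k, A (u t) k⟫) = g t := by
    intro t
    refine Finset.sum_congr rfl fun k _ => ?_
    rw [hu t]
  rw [h1 t₁, h1 t₂, hconst]
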